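/- Let f : ℝ^d → ℝ be twice continuously differentiable with L_H-Lipschitz continuous Hessian. Let x ∈ ℝ^d, g = ∇f(x), H = ∇²f(x), and suppose d ∈ ℝ^d is nonzero and satisfies ⟨d, g⟩ + ⟨d, Hd⟩ ≤ 0 and ⟨d, Hd⟩ ≥ σ‖d‖² for some σ > 0. Let 0 < ρ < 1/2. Then: (a) every step-size α with 0 < α ≤ min{1, √(3σ(1 − 2ρ)/(L_H‖d‖))} satisfies the Armijo condition f(x + αd) ≤ f(x) + ρα⟨g, d⟩; and (b) with α* = min{1, √(3σ(1 − 2ρ)/(L_H‖d‖))}, one has f(x + α*d) ≤ f(x) − ρσ·min{(3σ(1 − 2ρ)/L_H)², ‖d‖²}. -/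

import Mathlib

open scoped RealInnerProductSpace

/-- The Hessian of `f : ℝ^d → ℝ` at `x`, as the derivative of the gradient. -/
noncomputable def hessian {d : ℕ} (f : EuclideanSpace ℝ (Fin d) → ℝ)
    (x : EuclideanSpace ℝ (Fin d)) :
    EuclideanSpace ℝ (Fin d) →L[ℝ] EuclideanSpace ℝ (Fin d) :=
  fderiv ℝ (gradient f) x

/-- If a function has everywhere nonpositive derivative on `[0, ∞)`, it decreases. -/
lemma aux_decrease {u u' : ℝ → ℝ} (h : ∀ s, HasDerivAt u (u' s) s)
    (h0 : ∀ s, 0 ≤ s → u' s ≤ 0) : ∀ a, 0 ≤ a → u a ≤ u 0 := by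
  intro a ha
  have hanti : AntitoneOn u (Set.Ici (0 : ℝ)) := by
    apply antitoneOn_of_deriv_nonpos (convex_Ici 0)
    · exact fun s _ => ((h s).continuousAt).continuousWithinAt
    · exact fun s _ => ((h s).differentiableAt).differentiableWithinAt
    · intro s hs
      rw [interior_Ici] at hs
      rw [(h s).deriv]
      exact h0 s (le_of_lt hs)
  exact hanti (Set.mem_Ici.mpr le_rfl) (Set.mem_Ici.mpr ha) ha

set_option maxHeartbeats 1000000 in
theorem sol_direction_decrease {d : ℕ} (f : EuclideanSpace ℝ (Fin d) → ℝ)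
    (LH σ ρ : ℝ) (hLH : 0 < LH) (hσ : 0 < σ) (hρ0 : 0 < ρ) (hρ1 : ρ < 1 / 2)
    (hf : ContDiff ℝ 2 f)
    (hLip : ∀ x y : EuclideanSpace ℝ (Fin d), ‖hessian f x - hessian f y‖ ≤ LH * ‖x - y‖)
    (x v : EuclideanSpace ℝ (Fin d)) (hv : v ≠ 0)
    (hdesc : ⟪v, gradient f x⟫ + ⟪v, hessian f x v⟫ ≤ 0)
    (hcurv : σ * ‖v‖ ^ 2 ≤ ⟪v, hessian f x v⟫) :
    (∀ α : ℝ, 0 < α → α ≤ min 1 (Real.sqrt (3 * σ * (1 - 2 * ρ) / (LH * ‖v‖))) →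
      f (x + α • v) ≤ f x + ρ * α * ⟪gradient f x, v⟫) ∧
    f (x + min 1 (Real.sqrt (3 * σ * (1 - 2 * ρ) / (LH * ‖v‖))) • v) ≤
      f x - ρ * σ * min ((3 * σ * (1 - 2 * ρ) / LH) ^ 2) (‖v‖ ^ 2) := by
  have hvn : (0:ℝ) < ‖v‖ := norm_pos_iff.mpr hv
  set G : ℝ := ⟪v, gradient f x⟫ with hGdef
  set Q : ℝ := ⟪v, hessian f x v⟫ with hQdef
  have hQ : 0 < Q := lt_of_lt_of_le (by positivity) hcurv
  have hG : G ≤ -Q := by linarith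
  set C : ℝ := LH * ‖v‖ ^ 3 with hCdef
  have hCpos : 0 < C := by positivity
  -- differentiability facts
  have hfd : Differentiable ℝ f := hf.differentiable (by norm_num)
  have hgradC : ContDiff ℝ 1 (gradient f) := by
    have h1 : ContDiff ℝ 1 (fderiv ℝ f) := hf.fderiv_right (by norm_num)
    exact ((InnerProductSpace.toDual ℝ (EuclideanSpace ℝ (Fin d))).symm.contDiff).comp h1
  have hgradD : Differentiable ℝ (gradient f) := hgradC.differentiable (by norm_num)
  -- the line and its derivative
  have hline : ∀ s : ℝ, HasDerivAt (fun s : ℝ => x + s • v) v s := by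
    intro s
    exact (((hasDerivAt_id' s).smul_const v).const_add x).congr_deriv (one_smul ℝ v)
  -- derivative of φ s = f (x + s • v)
  have hphi : ∀ s : ℝ, HasDerivAt (fun s : ℝ => f (x + s • v))
      (⟪v, gradient f (x + s • v)⟫) s := by
    intro s
    have hF : HasFDerivAt f
        (InnerProductSpace.toDual ℝ _ (gradient f (x + s • v))) (x + s • v) :=
      (hfd (x + s • v)).hasGradientAt
    have h2 := hF.comp_hasDerivAt s (hline s)
    have heq : (InnerProductSpace.toDual ℝ (EuclideanSpace ℝ (Fin d))
        (gradient f (x + s • v))) v = ⟪v, gradient f (x + s • v)⟫ := by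
      rw [InnerProductSpace.toDual_apply_apply]; exact real_inner_comm _ _
    rw [heq] at h2
    exact h2
  -- derivative of ψ s = ⟪v, gradient f (x + s • v)⟫
  have hpsi : ∀ s : ℝ, HasDerivAt (fun s : ℝ => ⟪v, gradient f (x + s • v)⟫)
      (⟪v, hessian f (x + s • v) v⟫) s := by
    intro s
    have hH : HasFDerivAt (gradient f) (hessian f (x + s • v)) (x + s • v) :=
      (hgradD (x + s • v)).hasFDerivAt
    have hcomp : HasDerivAt (fun s : ℝ => gradient f (x + s • v))
        (hessian f (x + s • v) v) s := by
      have h := hH.comp_hasDerivAt s (hline s); exact h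
    have h2 := ((innerSL ℝ v).hasFDerivAt).comp_hasDerivAt s hcomp
    have heq : (innerSL ℝ v) (hessian f (x + s • v) v) = ⟪v, hessian f (x + s • v) v⟫ := rfl
    rw [heq] at h2
    exact h2
  -- Lipschitz bound on ψ'
  have hpsider : ∀ s : ℝ, 0 ≤ s → ⟪v, hessian f (x + s • v) v⟫ - Q ≤ C * s := by
    intro s hs
    have h1 : ⟪v, hessian f (x + s • v) v⟫ - Q
        = ⟪v, (hessian f (x + s • v) - hessian f x) v⟫ := by
      rw [ContinuousLinearMap.sub_apply, inner_sub_right]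
    rw [h1]
    have h2 : ⟪v, (hessian f (x + s • v) - hessian f x) v⟫
        ≤ ‖v‖ * ‖(hessian f (x + s • v) - hessian f x) v‖ := real_inner_le_norm _ _
    have h3 : ‖(hessian f (x + s • v) - hessian f x) v‖
        ≤ ‖hessian f (x + s • v) - hessian f x‖ * ‖v‖ :=
      ContinuousLinearMap.le_opNorm _ _
    have h4 : ‖hessian f (x + s • v) - hessian f x‖ ≤ LH * (s * ‖v‖) := by
      have hnorm : ‖x + s • v - x‖ = s * ‖v‖ := by
        rw [add_sub_cancel_left, norm_smul, Real.norm_eq_abs, abs_of_nonneg hs]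
      have := hLip (x + s • v) x
      rw [hnorm] at this
      exact this
    calc ⟪v, (hessian f (x + s • v) - hessian f x) v⟫
        ≤ ‖v‖ * (‖hessian f (x + s • v) - hessian f x‖ * ‖v‖) :=
          h2.trans (by nlinarith [norm_nonneg ((hessian f (x + s • v) - hessian f x) v)])
      _ ≤ ‖v‖ * ((LH * (s * ‖v‖)) * ‖v‖) := by nlinarith
      _ = C * s := by rw [hCdef]; ring
  -- Step A: quadratic bound on ψ
  have hpsibound : ∀ s : ℝ, 0 ≤ s →
      ⟪v, gradient f (x + s • v)⟫ ≤ G + s * Q + C * s ^ 2 / 2 := by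
    intro s hs
    have hu : ∀ t : ℝ, HasDerivAt
        (fun t : ℝ => ⟪v, gradient f (x + t • v)⟫ - (t * Q + C * t ^ 2 / 2))
        (⟪v, hessian f (x + t • v) v⟫ - (Q + C * t)) t := by
      intro t
      have hpoly : HasDerivAt (fun t : ℝ => t * Q + C * t ^ 2 / 2) (Q + C * t) t := by
        have h1 : HasDerivAt (fun t : ℝ => t * Q) Q t := by
          simpa using (hasDerivAt_id t).mul_const Q
        have h2 : HasDerivAt (fun t : ℝ => C * t ^ 2 / 2) (C * t) t := by
          have := ((hasDerivAt_pow 2 t).const_mul C).div_const 2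
          exact this.congr_deriv (by ring)
        exact h1.add h2
      exact (hpsi t).sub hpoly
    have hdec := aux_decrease hu (fun t ht => by
      have := hpsider t ht; linarith) s hs
    simp only [zero_smul, add_zero] at hdec
    linarith [hdec]
  -- Step B: cubic bound on φ
  have hcubic : ∀ a : ℝ, 0 ≤ a →
      f (x + a • v) ≤ f x + a * G + a ^ 2 / 2 * Q + C * a ^ 3 / 6 := by
    intro a ha
    have hw : ∀ t : ℝ, HasDerivAt
        (fun t : ℝ => f (x + t • v) - (t * G + t ^ 2 / 2 * Q + C * t ^ 3 / 6))
        (⟪v, gradient f (x + t • v)⟫ - (G + t * Q + C * t ^ 2 / 2)) t := by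
      intro t
      have hpoly : HasDerivAt (fun t : ℝ => t * G + t ^ 2 / 2 * Q + C * t ^ 3 / 6)
          (G + t * Q + C * t ^ 2 / 2) t := by
        have h1 : HasDerivAt (fun t : ℝ => t * G) G t := by
          simpa using (hasDerivAt_id t).mul_const G
        have h2 : HasDerivAt (fun t : ℝ => t ^ 2 / 2 * Q) (t * Q) t := by
          have := ((hasDerivAt_pow 2 t).div_const 2).mul_const Q
          exact this.congr_deriv (by ring)
        have h3 : HasDerivAt (fun t : ℝ => C * t ^ 3 / 6) (C * t ^ 2 / 2) t := by
          have := ((hasDerivAt_pow 3 t).const_mul C).div_const 6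
          exact this.congr_deriv (by ring)
        exact (h1.add h2).add h3
      exact (hphi t).sub hpoly
    have hdec := aux_decrease hw (fun t ht => by
      have := hpsibound t ht; linarith) a ha
    simp only [zero_smul, add_zero] at hdec
    linarith [hdec]
  -- the step-size threshold
  set t : ℝ := 3 * σ * (1 - 2 * ρ) / (LH * ‖v‖) with htdef
  have htpos : 0 < t := by
    apply div_pos (by nlinarith) (by positivity)
  have hteq : t * (LH * ‖v‖) = 3 * σ * (1 - 2 * ρ) := by
    rw [htdef]; field_simp
  -- Part (a)
  have parta : ∀ α : ℝ, 0 < α → α ≤ min 1 (Real.sqrt t) →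
      f (x + α • v) ≤ f x + ρ * α * ⟪gradient f x, v⟫ := by
    intro α hα hαle
    have hα1 : α ≤ 1 := hαle.trans (min_le_left _ _)
    have hαs : α ≤ Real.sqrt t := hαle.trans (min_le_right _ _)
    have hα2 : α ^ 2 ≤ t := by
      nlinarith [Real.sq_sqrt htpos.le, Real.sqrt_nonneg t]
    have hcub := hcubic α hα.le
    have hgoal : α * G + α ^ 2 / 2 * Q + C * α ^ 3 / 6 ≤ ρ * α * G := by
      have e1 : (1 - ρ) * α * G ≤ (1 - ρ) * α * (-Q) :=
        mul_le_mul_of_nonneg_left hG (by nlinarith)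
      have e2 : α ^ 2 / 2 * Q ≤ α / 2 * Q :=
        mul_le_mul_of_nonneg_right (by nlinarith) hQ.le
      have e3 : α * (1/2 - ρ) * (σ * ‖v‖ ^ 2) ≤ α * (1/2 - ρ) * Q :=
        mul_le_mul_of_nonneg_left hcurv (by nlinarith)
      have e4 : C * α ^ 3 / 6 ≤ α * (1/2 - ρ) * (σ * ‖v‖ ^ 2) := by
        have ha3 : α ^ 3 ≤ α * t := by nlinarith
        have h6 : C * α ^ 3 ≤ C * (α * t) := mul_le_mul_of_nonneg_left ha3 hCpos.le
        have h5 : C * (α * t) = α * (3 * σ * (1 - 2 * ρ)) * ‖v‖ ^ 2 := by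
          rw [hCdef]
          linear_combination (α * ‖v‖ ^ 2) * hteq
        nlinarith [h6, h5]
      linarith
    have hcomm : ⟪gradient f x, v⟫ = G := real_inner_comm _ _
    rw [hcomm]
    linarith
  refine ⟨fun α hα hle => parta α hα hle, ?_⟩
  -- Part (b)
  set c : ℝ := 3 * σ * (1 - 2 * ρ) / LH with hcdef
  have hcpos : 0 < c := by apply div_pos (by nlinarith) hLH
  have hct : c = t * ‖v‖ := by
    rw [hcdef, htdef]; field_simp
  set α : ℝ := min 1 (Real.sqrt t) with hαdef
  have hαpos : 0 < α := lt_min one_pos (Real.sqrt_pos.mpr htpos)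
  have hb := parta α hαpos le_rfl
  have hcomm : ⟪gradient f x, v⟫ = G := real_inner_comm _ _
  rw [hcomm] at hb
  -- f(...) ≤ f x + ρ α G ≤ f x - ρ α Q ≤ f x - ρ α σ ‖v‖²
  have key : min (c ^ 2) (‖v‖ ^ 2) ≤ α * ‖v‖ ^ 2 := by
    rcases le_total 1 (Real.sqrt t) with h | h
    · have : α = 1 := min_eq_left h
      rw [this, one_mul]
      exact min_le_right _ _
    · have hα : α = Real.sqrt t := min_eq_right h
      have ht1 : t ≤ 1 := by
        nlinarith [Real.sq_sqrt htpos.le, Real.sqrt_nonneg t]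
      have hts : t ≤ Real.sqrt t := by
        nlinarith [Real.sq_sqrt htpos.le, Real.sqrt_nonneg t, h]
      have ht2 : t ^ 2 ≤ Real.sqrt t := by nlinarith
      have h6 : t ^ 2 * ‖v‖ ^ 2 ≤ Real.sqrt t * ‖v‖ ^ 2 :=
        mul_le_mul_of_nonneg_right ht2 (sq_nonneg _)
      have : c ^ 2 ≤ α * ‖v‖ ^ 2 := by
        rw [hα, hct]
        nlinarith [h6]
      exact (min_le_left _ _).trans this
    -- end cases
  have step : f x + ρ * α * G ≤ f x - ρ * σ * min (c ^ 2) (‖v‖ ^ 2) := by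
    have h1 : ρ * α * G ≤ ρ * α * (-Q) :=
      mul_le_mul_of_nonneg_left hG (by positivity)
    have h2 : ρ * α * (σ * ‖v‖ ^ 2) ≤ ρ * α * Q :=
      mul_le_mul_of_nonneg_left hcurv (by positivity)
    have h3 : ρ * σ * min (c ^ 2) (‖v‖ ^ 2) ≤ ρ * σ * (α * ‖v‖ ^ 2) :=
      mul_le_mul_of_nonneg_left key (by positivity)
    nlinarith [h1, h2, h3]
  calc f (x + α • v) ≤ f x + ρ * α * G := hb
    _ ≤ f x - ρ * σ * min (c ^ 2) (‖v‖ ^ 2) := step
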